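/- Let x ∈ ℝᵐ, let A be an m×k real matrix with nonnegative entries, let λ ≥ 0, and let sᵗ ∈ ℝᵏ have strictly positive entries with (AᵀAsᵗ)_a + λ > 0 for every a. Then the vector s* defined by s*_a = sᵗ_a · (Aᵀx)_a / ((AᵀAsᵗ)_a + λ) is a global minimizer over ℝᵏ of the function s ↦ G(s, sᵗ) = F(sᵗ) + (s − sᵗ)ᵀ∇F(sᵗ) + (1/2)·(s − sᵗ)ᵀK(sᵗ)(s − sᵗ), where ∇F(sᵗ) = Aᵀ(Asᵗ − x) + λ·1. -/

import Mathlib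

open Matrix BigOperators

lemma nnsc_aux_quad (g d u v : ℝ) (hd : 0 < d) (hv : d * v = -g) :
    v * g + (1/2) * (d * v ^ 2) ≤ u * g + (1/2) * (d * u ^ 2) := by
  have h1 : u * g + (1/2) * (d * u ^ 2) - (v * g + (1/2) * (d * v ^ 2))
      = (1/2) * (d * (u - v) ^ 2) + (u - v) * (g + d * v) := by ring
  have h2 : g + d * v = 0 := by linarith
  rw [h2, mul_zero, add_zero] at h1
  linarith [mul_nonneg hd.le (sq_nonneg (u - v))]

/-- The multiplicative update
`s*_a = sᵗ_a · (Aᵀx)_a / ((AᵀAsᵗ)_a + λ)` is a global minimizer over `ℝᵏ`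
of the auxiliary function
`G(s, sᵗ) = F(sᵗ) + (s − sᵗ)ᵀ∇F(sᵗ) + (1/2)·(s − sᵗ)ᵀK(sᵗ)(s − sᵗ)`,
where `∇F(sᵗ) = Aᵀ(Asᵗ − x) + λ·1` and `K(sᵗ)` is the diagonal matrix with
entries `((AᵀA sᵗ)_a + λ) / sᵗ_a`, and
`F(s) = (1/2)·‖x − As‖² + λ·Σ_i s_i`. -/
theorem nnsc_multiplicative_update_minimizes_auxiliary
    {m k : ℕ}
    (x : Fin m → ℝ) (A : Matrix (Fin m) (Fin k) ℝ)
    (hA : ∀ i j, 0 ≤ A i j)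
    (lam : ℝ) (hlam : 0 ≤ lam)
    (sT : Fin k → ℝ) (hsT : ∀ a, 0 < sT a)
    (hden : ∀ a, 0 < (Aᵀ * A).mulVec sT a + lam)
    (F : (Fin k → ℝ) → ℝ)
    (hF : ∀ s', F s' =
      (1 / 2) * (∑ i, (x i - A.mulVec s' i) ^ 2) + lam * ∑ i, s' i)
    (K : Matrix (Fin k) (Fin k) ℝ)
    (hK : K = Matrix.diagonal (fun a => ((Aᵀ * A).mulVec sT a + lam) / sT a))
    (gradF : Fin k → ℝ)
    (hgrad : gradF = Aᵀ.mulVec (A.mulVec sT - x) + fun _ => lam)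
    (G : (Fin k → ℝ) → ℝ)
    (hG : ∀ s, G s = F sT + (s - sT) ⬝ᵥ gradF
      + (1 / 2) * ((s - sT) ⬝ᵥ K.mulVec (s - sT)))
    (sStar : Fin k → ℝ)
    (hsStar : ∀ a, sStar a = sT a * (Aᵀ.mulVec x) a / ((Aᵀ * A).mulVec sT a + lam)) :
    ∀ s : Fin k → ℝ, G sStar ≤ G s := by
  intro s
  set D : Fin k → ℝ := fun a => (Aᵀ * A).mulVec sT a + lam with hD
  have key : ∀ t : Fin k → ℝ, G t = F sT +
      ∑ a, ((t a - sT a) * gradF a + (1/2) * (D a / sT a * (t a - sT a) ^ 2)) := by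
    intro t
    rw [hG, hK]
    simp only [dotProduct, Matrix.mulVec_diagonal, Pi.sub_apply, Finset.mul_sum,
      Finset.sum_add_distrib, add_assoc]
    congr 1
    congr 1
    apply Finset.sum_congr rfl
    intro a _
    ring
  rw [key, key]
  apply add_le_add_right
  apply Finset.sum_le_sum
  intro a _
  have hsa := hsT a
  have hda := hden a
  apply nnsc_aux_quad
  · exact div_pos hda hsa
  · have hg : gradF a = D a - Aᵀ.mulVec x a := by
      rw [hgrad]
      simp only [Pi.add_apply, Matrix.mulVec_sub, Pi.sub_apply, hD]
      rw [← Matrix.mulVec_mulVec]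
      ring
    rw [hsStar a, hg]
    field_simp
    ring
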